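/- arXiv:1306.0036 — 8 statements merged into one kernel-verified Lean document; each statement's English description precedes it below -/
import Mathlib

section
/- Every node of the information graph has exactly one descendant. Precisely: for all k, k' ∈ ℕ and j, j' ∈ V, if s(k,j) = s(k',j') then s(k+1,j) = s(k'+1,j'). Consequently, for every r ∈ U there is exactly one s ∈ U with r → s, so the successor map σ : U → U with σ(s(k,j)) = s(k+1,j) is well defined. -/
/-- The reachability set `s(k,j) = {i : D i j ≤ k}`. -/
def reach {V : Type*} (D : V → V → ℕ∞) (k : ℕ) (j : V) : Set V :=
  {i | D i j ≤ (k : ℕ∞)}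

/-- The node set of the information graph: `U = {s(k,j) : k ∈ ℕ, j ∈ V}`. -/
def infoNodes {V : Type*} (D : V → V → ℕ∞) : Set (Set V) :=
  {s | ∃ (k : ℕ) (j : V), s = reach D k j}

/-- The edge relation of the information graph: `r → s` iff
`r = s(k,j)` and `s = s(k+1,j)` for some `k, j`. -/
def infoEdge {V : Type*} (D : V → V → ℕ∞) (r s : Set V) : Prop :=
  ∃ (k : ℕ) (j : V), r = reach D k j ∧ s = reach D (k + 1) j

lemma reach_succ {V : Type*} (D : V → V → ℕ∞)
    (hc : ∀ (k : ℕ) (i j : V),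
      D i j ≤ (k : ℕ∞) + 1 ↔ ∃ ℓ, D i ℓ ≤ 1 ∧ D ℓ j ≤ (k : ℕ∞))
    (k : ℕ) (j : V) :
    reach D (k + 1) j = {i | ∃ ℓ ∈ reach D k j, D i ℓ ≤ 1} := by
  ext i
  simp only [reach, Set.mem_setOf_eq, Nat.cast_add, Nat.cast_one, hc k i j]
  tauto

/-- Every node of the information graph has exactly one descendant:
if `s(k,j) = s(k',j')` then `s(k+1,j) = s(k'+1,j')`, and consequently
every `r ∈ U` has a unique `s` with `r → s` (so the successor map is well defined). -/
theorem unique_descendant {V : Type*} [Fintype V] (D : V → V → ℕ∞)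
    (ha : ∀ i, D i i = 0)
    (hb : ∀ i ℓ j, D i j ≤ D i ℓ + D ℓ j)
    (hc : ∀ (k : ℕ) (i j : V),
      D i j ≤ (k : ℕ∞) + 1 ↔ ∃ ℓ, D i ℓ ≤ 1 ∧ D ℓ j ≤ (k : ℕ∞)) :
    (∀ (k k' : ℕ) (j j' : V), reach D k j = reach D k' j' →
        reach D (k + 1) j = reach D (k' + 1) j') ∧
    (∀ r ∈ infoNodes D, ∃! s : Set V, infoEdge D r s) := by
  have key : ∀ (k k' : ℕ) (j j' : V), reach D k j = reach D k' j' →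
      reach D (k + 1) j = reach D (k' + 1) j' := by
    intro k k' j j' h
    rw [reach_succ D hc, reach_succ D hc, h]
  refine ⟨key, ?_⟩
  rintro r ⟨k, j, rfl⟩
  refine ⟨reach D (k + 1) j, ⟨k, j, rfl, rfl⟩, ?_⟩
  rintro s ⟨k', j', hr, rfl⟩
  exact key k' k j' j hr.symm
end

section
/- If the network graph has n = |V| ≥ 1 nodes, then the number of nodes of the information graph is bounded above by n² − n + 1, i.e. |U| ≤ n² − n + 1. -/
/-- If the network graph has `n = |V| ≥ 1` nodes, then `|U| ≤ n² − n + 1`. -/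
theorem info_graph_upper_bound {V : Type*} [Fintype V] [Nonempty V]
    (D : V → V → ℕ∞)
    (ha : ∀ i, D i i = 0)
    (hb : ∀ i ℓ j, D i j ≤ D i ℓ + D ℓ j)
    (hc : ∀ (k : ℕ) (i j : V),
      D i j ≤ (k : ℕ∞) + 1 ↔ ∃ ℓ, D i ℓ ≤ 1 ∧ D ℓ j ≤ (k : ℕ∞))
    (hd : ∀ i j, D i j = 0 → D j i = 0 → i = j) :
    (infoNodes D).ncard ≤ Fintype.card V ^ 2 - Fintype.card V + 1 := by
  classical
  set n := Fintype.card V with hn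
  have hn1 : 1 ≤ n := Fintype.card_pos
  -- monotonicity of reach chains
  have hmono : ∀ (j : V) (k k' : ℕ), k ≤ k' → reach D k j ⊆ reach D k' j := by
    intro j k k' hkk i hi
    simp only [reach, Set.mem_setOf_eq] at hi ⊢
    exact le_trans hi (Nat.cast_le.mpr hkk)
  -- every reach set contains j
  have hmem : ∀ (k : ℕ) (j : V), j ∈ reach D k j := by
    intro k j
    simp [reach, ha j]
  -- the choice of a "center" for each set in U
  have hUfin : (infoNodes D \ {Set.univ}).Finite := Set.toFinite _
  set f : Set V → ℕ × V := fun S =>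
    (S.ncard, if h : ∃ (k : ℕ) (j : V), S = reach D k j then h.choose_spec.choose
      else Classical.arbitrary V) with hf
  set t : Finset (ℕ × V) := Finset.Icc 1 (n - 1) ×ˢ Finset.univ with ht
  have hmaps : ∀ S ∈ infoNodes D \ {Set.univ}, f S ∈ (t : Set (ℕ × V)) := by
    intro S hS
    obtain ⟨hSU, hSne⟩ := hS
    obtain ⟨k, j, rfl⟩ := hSU
    have hfin : (reach D k j).Finite := Set.toFinite _
    have hpos : 0 < (reach D k j).ncard :=
      (Set.ncard_pos hfin).mpr ⟨j, hmem k j⟩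
    have hlt : (reach D k j).ncard < n := by
      by_contra hge
      push_neg at hge
      have huniv : (reach D k j).ncard = n := by
        have := Set.ncard_le_ncard (Set.subset_univ (reach D k j)) Set.finite_univ
        rw [Set.ncard_univ, Nat.card_eq_fintype_card] at this
        omega
      exact hSne (Set.eq_of_subset_of_ncard_le (Set.subset_univ _)
        (by rw [Set.ncard_univ, Nat.card_eq_fintype_card, huniv]))
    have hfst : (f (reach D k j)).1 = (reach D k j).ncard := rfl
    refine Finset.mem_coe.mpr (Finset.mem_product.mpr ⟨?_, Finset.mem_univ _⟩)
    exact Finset.mem_Icc.mpr ⟨by rw [hfst]; omega, by rw [hfst]; omega⟩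
  have hinj : Set.InjOn f (infoNodes D \ {Set.univ}) := by
    intro S hS S' hS' hfe
    have hS1 : ∃ (k : ℕ) (j : V), S = reach D k j := hS.1
    have hS'1 : ∃ (k : ℕ) (j : V), S' = reach D k j := hS'.1
    have h1 : f S = (S.ncard, hS1.choose_spec.choose) := by
      simp only [hf, dif_pos hS1]
    have h2 : f S' = (S'.ncard, hS'1.choose_spec.choose) := by
      simp only [hf, dif_pos hS'1]
    rw [h1, h2, Prod.mk.injEq] at hfe
    obtain ⟨hcard, hj⟩ := hfe
    have e1 : S = reach D hS1.choose hS1.choose_spec.choose := hS1.choose_spec.choose_spec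
    have e2 : S' = reach D hS'1.choose hS'1.choose_spec.choose := hS'1.choose_spec.choose_spec
    rw [← hj] at e2
    rcases le_total hS1.choose hS'1.choose with hle | hle
    · have hsub : S ⊆ S' := by rw [e1, e2]; exact hmono _ _ _ hle
      exact (Set.eq_of_subset_of_ncard_le hsub (le_of_eq hcard.symm) (Set.toFinite _))
    · have hsub : S' ⊆ S := by rw [e1, e2]; exact hmono _ _ _ hle
      exact (Set.eq_of_subset_of_ncard_le hsub (le_of_eq hcard) (Set.toFinite _)).symm
  have hbound : (infoNodes D \ {Set.univ}).ncard ≤ (n - 1) * n := by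
    have := Set.ncard_le_ncard_of_injOn f hmaps hinj (Set.toFinite _)
    rwa [Set.ncard_coe_finset, ht, Finset.card_product, Nat.card_Icc,
      Finset.card_univ, Nat.add_sub_cancel] at this
  have hsplit : (infoNodes D).ncard ≤ (infoNodes D \ {Set.univ}).ncard + 1 := by
    have hsub : infoNodes D ⊆ (infoNodes D \ {Set.univ}) ∪ {Set.univ} := by
      intro S hS
      by_cases h : S = Set.univ
      · right; exact h
      · left; exact ⟨hS, h⟩
    calc (infoNodes D).ncard ≤ ((infoNodes D \ {Set.univ}) ∪ {Set.univ}).ncard :=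
          Set.ncard_le_ncard hsub (Set.toFinite _)
      _ ≤ (infoNodes D \ {Set.univ}).ncard + ({Set.univ} : Set (Set V)).ncard :=
          Set.ncard_union_le _ _
      _ = (infoNodes D \ {Set.univ}).ncard + 1 := by rw [Set.ncard_singleton]
  have h4 : ∀ N : ℕ, 1 ≤ N → (N - 1) * N + 1 = N ^ 2 - N + 1 := by
    intro N hN
    obtain ⟨m, rfl⟩ : ∃ m, N = m + 1 := ⟨N - 1, by omega⟩
    have h2 : (m + 1) ^ 2 = m * (m + 1) + (m + 1) := by ring
    rw [h2, Nat.add_sub_cancel, Nat.add_sub_cancel]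
  calc (infoNodes D).ncard ≤ (infoNodes D \ {Set.univ}).ncard + 1 := hsplit
    _ ≤ (n - 1) * n + 1 := Nat.add_le_add_right hbound 1
    _ = n ^ 2 - n + 1 := h4 n hn1
end

section
/- The noise information set of each node equals the union of the label sets whose label contains that node: for every i ∈ V and t ∈ ℕ, ⋃_{s ∈ U : i ∈ s} L(t,s) = {(j,k) ∈ V × ℕ : k ≤ t and D i j ≤ t − k}. -/
/-- The noise information set
`Î(t,i) = {(j,k) : k ≤ t ∧ D i j ≤ t − k}` (natural subtraction, in `ℕ∞`). -/
def infoSet {V : Type*} (D : V → V → ℕ∞) (t : ℕ) (i : V) : Set (V × ℕ) :=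
  {p | p.2 ≤ t ∧ D i p.1 ≤ ((t - p.2 : ℕ) : ℕ∞)}

/-- The label sets, defined recursively: `L(0,s) = {(i,0) : ρ(i) = s}` and
`L(t+1,s) = {(i,t+1) : ρ(i) = s} ∪ ⋃_{r : σ(r) = s} L(t,r)`.
The pair `(j,k)` represents the noise vector `w_{k−1}^j`. -/
def labelSet {V U₀ : Type*} (ρ : V → U₀) (σ : U₀ → U₀) : ℕ → U₀ → Set (V × ℕ)
  | 0, s => {p | p.2 = 0 ∧ ρ p.1 = s}
  | t + 1, s => {p | p.2 = t + 1 ∧ ρ p.1 = s} ∪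
      ⋃ r ∈ {r : U₀ | σ r = s}, labelSet ρ σ t r


lemma iterCoe {V : Type*} (D : V → V → ℕ∞)
    (σ : ↥(infoNodes D) → ↥(infoNodes D))
    (hσ : ∀ (k : ℕ) (j : V),
      ((σ ⟨reach D k j, ⟨k, j, rfl⟩⟩ : ↥(infoNodes D)) : Set V) = reach D (k + 1) j)
    (ρ : V → ↥(infoNodes D))
    (hρ : ∀ j : V, ((ρ j : ↥(infoNodes D)) : Set V) = reach D 0 j) :
    ∀ (m : ℕ) (j : V), ((σ^[m] (ρ j) : ↥(infoNodes D)) : Set V) = reach D m j := by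
  intro m j
  induction m with
  | zero => simpa using hρ j
  | succ m ih =>
    have h : σ^[m] (ρ j) = ⟨reach D m j, ⟨m, j, rfl⟩⟩ := Subtype.ext ih
    rw [Function.iterate_succ_apply', h, hσ]

lemma mem_labelSet {V U₀ : Type*} (ρ : V → U₀) (σ : U₀ → U₀) :
    ∀ (t : ℕ) (s : U₀) (p : V × ℕ),
      p ∈ labelSet ρ σ t s ↔ p.2 ≤ t ∧ σ^[t - p.2] (ρ p.1) = s := by
  intro t
  induction t with
  | zero =>
    intro s p
    simp [labelSet, Nat.le_zero]
  | succ t ih =>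
    intro s p
    simp only [labelSet, Set.mem_union, Set.mem_setOf_eq, Set.mem_iUnion, ih]
    constructor
    · rintro (⟨h1, h2⟩ | ⟨r, hr, hk, hiter⟩)
      · exact ⟨h1 ▸ le_refl _, by simp [h1, h2]⟩
      · refine ⟨hk.trans (Nat.le_succ t), ?_⟩
        have he : t + 1 - p.2 = (t - p.2) + 1 := by omega
        rw [he, Function.iterate_succ_apply', hiter, hr]
    · rintro ⟨hk, hiter⟩
      rcases Nat.lt_or_ge p.2 (t + 1) with h | h
      · right
        have hk' : p.2 ≤ t := by omega
        have he : t + 1 - p.2 = (t - p.2) + 1 := by omega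
        rw [he, Function.iterate_succ_apply'] at hiter
        exact ⟨σ^[t - p.2] (ρ p.1), hiter, hk', rfl⟩
      · left
        have h2 : p.2 = t + 1 := le_antisymm hk h
        exact ⟨h2, by simpa [h2] using hiter⟩

/-- The noise information set of node `i` equals the union of the label sets
whose label contains `i`: for every `i` and `t`,
`⋃_{s ∈ U : i ∈ s} L(t,s) = Î(t,i)`. -/
theorem noise_info_eq_union_labels {V : Type*} [Fintype V] (D : V → V → ℕ∞)
    (ha : ∀ i, D i i = 0)
    (hb : ∀ i ℓ j, D i j ≤ D i ℓ + D ℓ j)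
    (hc : ∀ (k : ℕ) (i j : V),
      D i j ≤ (k : ℕ∞) + 1 ↔ ∃ ℓ, D i ℓ ≤ 1 ∧ D ℓ j ≤ (k : ℕ∞))
    (σ : ↥(infoNodes D) → ↥(infoNodes D))
    (hσ : ∀ (k : ℕ) (j : V),
      ((σ ⟨reach D k j, ⟨k, j, rfl⟩⟩ : ↥(infoNodes D)) : Set V) = reach D (k + 1) j)
    (ρ : V → ↥(infoNodes D))
    (hρ : ∀ j : V, ((ρ j : ↥(infoNodes D)) : Set V) = reach D 0 j) :
    ∀ (i : V) (t : ℕ),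
      (⋃ s ∈ {s : ↥(infoNodes D) | i ∈ (s : Set V)}, labelSet ρ σ t s) =
        infoSet D t i := by
  intro i t
  ext p
  simp only [Set.mem_iUnion, Set.mem_setOf_eq, mem_labelSet, infoSet]
  constructor
  · rintro ⟨s, hi, hk, hiter⟩
    refine ⟨hk, ?_⟩
    have hc' := iterCoe D σ hσ ρ hρ (t - p.2) p.1
    rw [hiter] at hc'
    have : i ∈ reach D (t - p.2) p.1 := hc' ▸ hi
    exact this
  · rintro ⟨hk, hD⟩
    exact ⟨σ^[t - p.2] (ρ p.1), by rw [iterCoe D σ hσ ρ hρ]; exact hD, hk, rfl⟩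
end

section
/- State decomposition: under the definitions below, the state decomposes over the information graph as x_t = Σ_{s ∈ 𝒰} ι_s(ζ_t^s) for every t ∈ ℕ. -/
noncomputable section
open Classical

/-- The linear inclusion `ι_s : X^s → X` placing the coordinates of `s`
and zero elsewhere. -/
def incl {V : Type*} (X : V → Type*) [∀ i, AddCommGroup (X i)]
    [∀ i, Module ℝ (X i)] (s : Set V) :
    (∀ i : s, X (i : V)) →ₗ[ℝ] (∀ i, X i) where
  toFun v i := if h : i ∈ s then v ⟨i, h⟩ else 0
  map_add' u v := by funext i; by_cases h : i ∈ s <;> simp [h]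
  map_smul' c v := by funext i; by_cases h : i ∈ s <;> simp [h]


lemma incl_single {V : Type*} [DecidableEq V] (Xf : V → Type*) [∀ i, AddCommGroup (Xf i)]
    [∀ i, Module ℝ (Xf i)] (s : Set V) (i : V) (h : i ∈ s) (v : Xf i) :
    incl Xf s (LinearMap.single ℝ (fun j : s => Xf (j : V)) ⟨i, h⟩ v) = Pi.single i v := by
  classical
  funext j
  by_cases hj : j = i
  · subst hj
    simp [incl, Pi.single_eq_same, h]
  · by_cases hjs : j ∈ s
    · have hne : (⟨j, hjs⟩ : s) ≠ ⟨i, h⟩ := by simp [Subtype.ext_iff, hj]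
      simp [incl, hjs, LinearMap.single_apply, Pi.single_eq_of_ne, hne, hj]
    · simp [incl, hjs, Pi.single_eq_of_ne hj]

lemma sum_root {V : Type*} [Fintype V] [DecidableEq V] {U₀ : Type*} [Fintype U₀]
    (Xf : V → Type*) [∀ i, AddCommGroup (Xf i)] [∀ i, Module ℝ (Xf i)]
    (m : U₀ → Set V) (ρ : V → U₀) (hρ : ∀ i, i ∈ m (ρ i)) (g : ∀ i, Xf i) :
    (∑ s : U₀, incl Xf (m s)
      (∑ i : V, if h : ρ i = s then
        LinearMap.single ℝ (fun j : m s => Xf (j : V)) ⟨i, h ▸ hρ i⟩ (g i) else 0)) = g := by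
  classical
  have : (∑ s : U₀, incl Xf (m s)
      (∑ i : V, if h : ρ i = s then
        LinearMap.single ℝ (fun j : m s => Xf (j : V)) ⟨i, h ▸ hρ i⟩ (g i) else 0))
      = ∑ i : V, ∑ s : U₀, if h : ρ i = s then
        incl Xf (m s) (LinearMap.single ℝ (fun j : m s => Xf (j : V)) ⟨i, h ▸ hρ i⟩ (g i)) else 0 := by
    rw [Finset.sum_comm]
    refine Finset.sum_congr rfl fun s _ => ?_
    rw [map_sum]
    refine Finset.sum_congr rfl fun i _ => ?_
    split <;> simp
  rw [this]
  have h2 : ∀ i : V, (∑ s : U₀, if h : ρ i = s then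
      incl Xf (m s) (LinearMap.single ℝ (fun j : m s => Xf (j : V)) ⟨i, h ▸ hρ i⟩ (g i)) else 0)
      = Pi.single i (g i) := by
    intro i
    rw [Finset.sum_dite_eq, if_pos (Finset.mem_univ _)]
    exact incl_single Xf (m (ρ i)) i (hρ i) (g i)
  simp only [h2]
  exact funext fun j => by simp [Finset.sum_pi_single]

/-- State decomposition over the information graph: with controller states
`ζ_t^s` driven by the recursion of the paper, the global state satisfies
`x_t = Σ_{s ∈ 𝒰} ι_s(ζ_t^s)` for every `t`.  Here `U₀` indexes the nodes of the
information graph, `m s ⊆ V` is the label of node `s`, `σ` is the successor map,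
`ρ` is the root map (with `i ∈ ρ(i)`), and `w k` denotes the noise `w_{k−1}`
(so `w 0` is the initial condition). -/
theorem state_decomposition {V : Type*} [Fintype V] [DecidableEq V]
    {U₀ : Type*} [Fintype U₀]
    (Xf Yf : V → Type*)
    [∀ i, AddCommGroup (Xf i)] [∀ i, Module ℝ (Xf i)]
    [∀ i, AddCommGroup (Yf i)] [∀ i, Module ℝ (Yf i)]
    (m : U₀ → Set V) (σ : U₀ → U₀) (ρ : V → U₀)
    (hρ : ∀ i, i ∈ m (ρ i))
    (A : ℕ → ((∀ i, Xf i) →ₗ[ℝ] (∀ i, Xf i)))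
    (B : ℕ → ((∀ i, Yf i) →ₗ[ℝ] (∀ i, Xf i)))
    (Ah : ∀ (_ : ℕ) (r : U₀), (∀ i : m r, Xf (i : V)) →ₗ[ℝ] (∀ i : m (σ r), Xf (i : V)))
    (Bh : ∀ (_ : ℕ) (r : U₀), (∀ i : m r, Yf (i : V)) →ₗ[ℝ] (∀ i : m (σ r), Xf (i : V)))
    (hA : ∀ t r, (A t) ∘ₗ incl Xf (m r) = (incl Xf (m (σ r))) ∘ₗ (Ah t r))
    (hB : ∀ t r, (B t) ∘ₗ incl Yf (m r) = (incl Xf (m (σ r))) ∘ₗ (Bh t r))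
    (w : ℕ → ∀ i, Xf i)
    (φ : ℕ → ∀ r : U₀, (∀ i : m r, Yf (i : V)))
    (ζ : ℕ → ∀ s : U₀, (∀ i : m s, Xf (i : V)))
    (hζ0 : ∀ s : U₀, ζ 0 s =
      ∑ i : V, if h : ρ i = s then
        LinearMap.single ℝ (fun j : m s => Xf (j : V)) ⟨i, h ▸ hρ i⟩ (w 0 i) else 0)
    (hζ : ∀ (t : ℕ) (s : U₀), ζ (t + 1) s =
      (∑ r : U₀, if h : σ r = s then
        h ▸ ((Ah t r) (ζ t r) + (Bh t r) (φ t r)) else 0) +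
      ∑ i : V, if h : ρ i = s then
        LinearMap.single ℝ (fun j : m s => Xf (j : V)) ⟨i, h ▸ hρ i⟩ (w (t + 1) i) else 0)
    (u : ℕ → ∀ i, Yf i)
    (hu : ∀ t, u t = ∑ r : U₀, incl Yf (m r) (φ t r))
    (x : ℕ → ∀ i, Xf i)
    (hx0 : x 0 = w 0)
    (hx : ∀ t, x (t + 1) = A t (x t) + B t (u t) + w (t + 1)) :
    ∀ t, x t = ∑ s : U₀, incl Xf (m s) (ζ t s) := by
  intro t
  induction t with
  | zero =>
      rw [hx0]
      have := sum_root Xf m ρ hρ (w 0)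
      simp only [hζ0]
      exact this.symm
  | succ t ih =>
      rw [hx t, ih, hu t]
      have hAsum : A t (∑ r : U₀, incl Xf (m r) (ζ t r))
          = ∑ r : U₀, incl Xf (m (σ r)) (Ah t r (ζ t r)) := by
        rw [map_sum]
        exact Finset.sum_congr rfl fun r _ => LinearMap.congr_fun (hA t r) (ζ t r)
      have hBsum : B t (∑ r : U₀, incl Yf (m r) (φ t r))
          = ∑ r : U₀, incl Xf (m (σ r)) (Bh t r (φ t r)) := by
        rw [map_sum]
        exact Finset.sum_congr rfl fun r _ => LinearMap.congr_fun (hB t r) (φ t r)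
      have hw := sum_root Xf m ρ hρ (w (t + 1))
      simp only [hζ, map_add]
      rw [Finset.sum_add_distrib, hw, hAsum, hBsum]
      congr 1
      have : (∑ s : U₀, incl Xf (m s) (∑ r : U₀, if h : σ r = s then
          h ▸ ((Ah t r) (ζ t r) + (Bh t r) (φ t r)) else 0))
          = ∑ r : U₀, ∑ s : U₀, if h : σ r = s then
            incl Xf (m s) (h ▸ ((Ah t r) (ζ t r) + (Bh t r) (φ t r))) else 0 := by
        rw [Finset.sum_comm]
        refine Finset.sum_congr rfl fun s _ => ?_
        rw [map_sum]
        refine Finset.sum_congr rfl fun r _ => ?_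
        split <;> simp
      rw [this]
      rw [← Finset.sum_add_distrib]
      refine Finset.sum_congr rfl fun r _ => ?_
      rw [Finset.sum_dite_eq]
      simp
end
end

section
/- Each controller state depends only on the noise terms in its label set: suppose the inputs are generated by the feedback law φ_t^r = K_t^r(ζ_t^r) for given linear maps K_t^r : X^r → Y^r. If (w_t^i) and (w'_t{}^i) are two noise families such that w_{k−1}^j = w'_{k−1}{}^j for every pair (j,k) ∈ L(t,s), then the corresponding recursively defined vectors ζ_t^s computed from the two noise families are equal; moreover the map from the noise family to ζ_t^s is linear. -/
noncomputable section
open Classical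

/-- The controller states `ζ_t^s` of the closed-loop system with feedback
`φ_t^r = K_t^r(ζ_t^r)`, as a function of the noise family `w`
(`w k i` denotes `w_{k−1}^i`, so `w 0` is the initial condition). -/
def zeta {V : Type*} [Fintype V] {U₀ : Type*} [Fintype U₀]
    (Xf Yf : V → Type*)
    [∀ i, AddCommGroup (Xf i)] [∀ i, Module ℝ (Xf i)]
    [∀ i, AddCommGroup (Yf i)] [∀ i, Module ℝ (Yf i)]
    (m : U₀ → Set V) (σ : U₀ → U₀) (ρ : V → U₀) (hρ : ∀ i, i ∈ m (ρ i))
    (Ah : ∀ (_ : ℕ) (r : U₀), (∀ i : m r, Xf (i : V)) →ₗ[ℝ] (∀ i : m (σ r), Xf (i : V)))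
    (Bh : ∀ (_ : ℕ) (r : U₀), (∀ i : m r, Yf (i : V)) →ₗ[ℝ] (∀ i : m (σ r), Xf (i : V)))
    (K : ∀ (_ : ℕ) (r : U₀), (∀ i : m r, Xf (i : V)) →ₗ[ℝ] (∀ i : m r, Yf (i : V)))
    (w : ℕ → ∀ i, Xf i) : ℕ → ∀ s : U₀, (∀ i : m s, Xf (i : V))
  | 0 => fun s => ∑ i : V, if h : ρ i = s then
      LinearMap.single ℝ (fun j : m s => Xf (j : V)) ⟨i, h ▸ hρ i⟩ (w 0 i) else 0
  | t + 1 => fun s =>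
      (∑ r : U₀, if h : σ r = s then
        h ▸ ((Ah t r) (zeta Xf Yf m σ ρ hρ Ah Bh K w t r) +
             (Bh t r) ((K t r) (zeta Xf Yf m σ ρ hρ Ah Bh K w t r))) else 0) +
      ∑ i : V, if h : ρ i = s then
        LinearMap.single ℝ (fun j : m s => Xf (j : V)) ⟨i, h ▸ hρ i⟩ (w (t + 1) i) else 0

/-- Each controller state depends only on the noise terms in its label set:
if two noise families agree on `L(t,s)`, the corresponding `ζ_t^s` are equal;
moreover the map from the noise family to `ζ_t^s` is linear. -/
theorem zeta_depends_only_on_labelSet {V : Type*} [Fintype V]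
    {U₀ : Type*} [Fintype U₀]
    (Xf Yf : V → Type*)
    [∀ i, AddCommGroup (Xf i)] [∀ i, Module ℝ (Xf i)]
    [∀ i, AddCommGroup (Yf i)] [∀ i, Module ℝ (Yf i)]
    (m : U₀ → Set V) (σ : U₀ → U₀) (ρ : V → U₀) (hρ : ∀ i, i ∈ m (ρ i))
    (Ah : ∀ (_ : ℕ) (r : U₀), (∀ i : m r, Xf (i : V)) →ₗ[ℝ] (∀ i : m (σ r), Xf (i : V)))
    (Bh : ∀ (_ : ℕ) (r : U₀), (∀ i : m r, Yf (i : V)) →ₗ[ℝ] (∀ i : m (σ r), Xf (i : V)))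
    (K : ∀ (_ : ℕ) (r : U₀), (∀ i : m r, Xf (i : V)) →ₗ[ℝ] (∀ i : m r, Yf (i : V))) :
    (∀ (w w' : ℕ → ∀ i, Xf i) (t : ℕ) (s : U₀),
      (∀ p ∈ labelSet ρ σ t s, w p.2 p.1 = w' p.2 p.1) →
      zeta Xf Yf m σ ρ hρ Ah Bh K w t s = zeta Xf Yf m σ ρ hρ Ah Bh K w' t s) ∧
    (∀ (w w' : ℕ → ∀ i, Xf i) (c : ℝ) (t : ℕ) (s : U₀),
      zeta Xf Yf m σ ρ hρ Ah Bh K (fun k i => c • w k i + w' k i) t s =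
        c • zeta Xf Yf m σ ρ hρ Ah Bh K w t s +
          zeta Xf Yf m σ ρ hρ Ah Bh K w' t s) := by
  constructor
  · intro w w' t
    induction t with
    | zero =>
      intro s hag
      simp only [zeta]
      refine Finset.sum_congr rfl fun i _ => ?_
      by_cases h : ρ i = s
      · simp only [dif_pos h, hag (i, 0) ⟨rfl, h⟩]
      · simp [h]
    | succ t ih =>
      intro s hag
      simp only [zeta]
      congr 1
      · refine Finset.sum_congr rfl fun r _ => ?_
        by_cases h : σ r = s
        · have hz : zeta Xf Yf m σ ρ hρ Ah Bh K w t r =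
              zeta Xf Yf m σ ρ hρ Ah Bh K w' t r := by
            refine ih r fun p hp => hag p ?_
            exact Or.inr (Set.mem_biUnion h hp)
          simp only [dif_pos h, hz]
        · simp [h]
      · refine Finset.sum_congr rfl fun i _ => ?_
        by_cases h : ρ i = s
        · simp only [dif_pos h, hag (i, t + 1) (Or.inl ⟨rfl, h⟩)]
        · simp [h]
  · intro w w' c t
    induction t with
    | zero =>
      intro s
      simp only [zeta]
      rw [Finset.smul_sum, ← Finset.sum_add_distrib]
      refine Finset.sum_congr rfl fun i _ => ?_
      by_cases h : ρ i = s
      · simp only [dif_pos h, map_add, map_smul]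
      · simp [h]
    | succ t ih =>
      intro s
      simp only [zeta]
      rw [smul_add, add_add_add_comm]
      congr 1
      · rw [Finset.smul_sum, ← Finset.sum_add_distrib]
        refine Finset.sum_congr rfl fun r _ => ?_
        by_cases h : σ r = s
        · subst h
          simp only [dif_pos rfl, ih]
          simp only [map_add, map_smul]
          simp only [dif_pos trivial, smul_add]
          abel
        · simp [h]
      · rw [Finset.smul_sum, ← Finset.sum_add_distrib]
        refine Finset.sum_congr rfl fun i _ => ?_
        by_cases h : ρ i = s
        · simp only [dif_pos h, map_add, map_smul]
        · simp [h]
end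
end

section
/- Optimality of the Riccati gain: for every ζ ∈ ℝⁿ, the function φ ↦ ζᵀQζ + 2ζᵀSφ + φᵀRφ + (Aζ + Bφ)ᵀX'(Aζ + Bφ) attains its minimum over φ ∈ ℝᵐ uniquely at φ = Kζ, the minimum value equals ζᵀXζ, and the matrix X is positive semidefinite. -/
open Matrix

private lemma transfer {a c : ℕ} (C : Matrix (Fin c) (Fin a) ℝ)
    (x : Fin a → ℝ) (w : Fin c → ℝ) : x ⬝ᵥ Cᵀ *ᵥ w = (C *ᵥ x) ⬝ᵥ w := by
  rw [dotProduct_mulVec, vecMul_transpose]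

private lemma conj_quad {a b c : ℕ} (C : Matrix (Fin c) (Fin a) ℝ)
    (N : Matrix (Fin c) (Fin c) ℝ) (D : Matrix (Fin c) (Fin b) ℝ)
    (x : Fin a → ℝ) (y : Fin b → ℝ) :
    (C *ᵥ x) ⬝ᵥ N *ᵥ (D *ᵥ y) = x ⬝ᵥ (Cᵀ * N * D) *ᵥ y := by
  rw [Matrix.mul_assoc, ← mulVec_mulVec, transfer, ← mulVec_mulVec]

private lemma conj_half {a c : ℕ} (C : Matrix (Fin c) (Fin a) ℝ)
    (N : Matrix (Fin c) (Fin c) ℝ) (x : Fin a → ℝ) (y : Fin c → ℝ) :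
    (C *ᵥ x) ⬝ᵥ N *ᵥ y = x ⬝ᵥ (Cᵀ * N) *ᵥ y := by
  rw [← mulVec_mulVec, transfer]

private lemma cross_symm {c : ℕ} {N : Matrix (Fin c) (Fin c) ℝ} (hN : Nᵀ = N)
    (x y : Fin c → ℝ) : y ⬝ᵥ N *ᵥ x = x ⬝ᵥ N *ᵥ y := by
  rw [dotProduct_mulVec, ← hN, vecMul_transpose, hN, dotProduct_comm]

/-- Step 1: rewriting the cost in the form `ζQζ + ζAᵀX'Aζ + 2ζMφ + φΩφ`. -/
private lemma step1 {n m p : ℕ}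
    (Q : Matrix (Fin n) (Fin n) ℝ) (S : Matrix (Fin n) (Fin m) ℝ)
    (R : Matrix (Fin m) (Fin m) ℝ) (A : Matrix (Fin p) (Fin n) ℝ)
    (B : Matrix (Fin p) (Fin m) ℝ) (X' : Matrix (Fin p) (Fin p) ℝ)
    (hX's : X'ᵀ = X') (ζ : Fin n → ℝ) (φ : Fin m → ℝ) :
    ζ ⬝ᵥ Q *ᵥ ζ + 2 * (ζ ⬝ᵥ S *ᵥ φ) + φ ⬝ᵥ R *ᵥ φ +
        (A *ᵥ ζ + B *ᵥ φ) ⬝ᵥ X' *ᵥ (A *ᵥ ζ + B *ᵥ φ)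
      = ζ ⬝ᵥ Q *ᵥ ζ + ζ ⬝ᵥ (Aᵀ * X' * A) *ᵥ ζ +
        2 * (ζ ⬝ᵥ (S + Aᵀ * X' * B) *ᵥ φ) + φ ⬝ᵥ (R + Bᵀ * X' * B) *ᵥ φ := by
  have e1 : (A *ᵥ ζ + B *ᵥ φ) ⬝ᵥ X' *ᵥ (A *ᵥ ζ + B *ᵥ φ)
      = ζ ⬝ᵥ (Aᵀ * X' * A) *ᵥ ζ + 2 * (ζ ⬝ᵥ (Aᵀ * X' * B) *ᵥ φ) + φ ⬝ᵥ (Bᵀ * X' * B) *ᵥ φ := by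
    rw [mulVec_add, dotProduct_add, add_dotProduct, add_dotProduct,
      cross_symm hX's (A *ᵥ ζ) (B *ᵥ φ), conj_quad, conj_quad, conj_quad]
    ring
  rw [e1, add_mulVec S, dotProduct_add, add_mulVec R, dotProduct_add]
  ring

/-- Optimality of the Riccati gain: with `Ω = R + BᵀX'B`,
`K = −Ω⁻¹(S + AᵀX'B)ᵀ` and `X = Q + AᵀX'A − KᵀΩK`, for every `ζ` the function
`φ ↦ ζᵀQζ + 2ζᵀSφ + φᵀRφ + (Aζ + Bφ)ᵀX'(Aζ + Bφ)` attains its minimum uniquely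
at `φ = Kζ`, the minimum value is `ζᵀXζ`, and `X` is positive semidefinite. -/
theorem riccati_gain_optimal (n m p : ℕ)
    (Q : Matrix (Fin n) (Fin n) ℝ) (S : Matrix (Fin n) (Fin m) ℝ)
    (R : Matrix (Fin m) (Fin m) ℝ) (A : Matrix (Fin p) (Fin n) ℝ)
    (B : Matrix (Fin p) (Fin m) ℝ) (X' : Matrix (Fin p) (Fin p) ℝ)
    (hQ : Q.IsSymm) (hX' : X'.PosSemidef) (hR : R.PosDef)
    (hblock : (Matrix.fromBlocks Q S Sᵀ R).PosSemidef) :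
    let Ω : Matrix (Fin m) (Fin m) ℝ := R + Bᵀ * X' * B
    let K : Matrix (Fin m) (Fin n) ℝ := -(Ω⁻¹ * (S + Aᵀ * X' * B)ᵀ)
    let X : Matrix (Fin n) (Fin n) ℝ := Q + Aᵀ * X' * A - Kᵀ * Ω * K
    X.PosSemidef ∧
    ∀ ζ : Fin n → ℝ,
      let f : (Fin m → ℝ) → ℝ := fun φ =>
        ζ ⬝ᵥ Q.mulVec ζ + 2 * (ζ ⬝ᵥ S.mulVec φ) + φ ⬝ᵥ R.mulVec φ +
          (A.mulVec ζ + B.mulVec φ) ⬝ᵥ X'.mulVec (A.mulVec ζ + B.mulVec φ)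
      (∀ φ : Fin m → ℝ, f (K.mulVec ζ) ≤ f φ) ∧
      (∀ φ : Fin m → ℝ, f φ = f (K.mulVec ζ) → φ = K.mulVec ζ) ∧
      f (K.mulVec ζ) = ζ ⬝ᵥ X.mulVec ζ := by
  intro Ω K X
  have hX's : X'ᵀ = X' := by
    have h : X'ᴴ = X'ᵀ := by ext i j; simp [conjTranspose_apply, transpose_apply]
    rw [← h]; exact hX'.1
  -- Ω is positive definite
  have hBXB : (Bᵀ * X' * B).PosSemidef := by
    have h := hX'.conjTranspose_mul_mul_same B
    rwa [show Bᴴ = Bᵀ by ext i j; simp [conjTranspose_apply, transpose_apply]] at h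
  have hΩpd : Ω.PosDef := hR.add_posSemidef hBXB
  have hΩs : Ωᵀ = Ω := by
    have h : Ωᴴ = Ωᵀ := by ext i j; simp [conjTranspose_apply, transpose_apply]
    rw [← h]; exact hΩpd.1
  have hΩinv : Ω * Ω⁻¹ = 1 := Matrix.mul_nonsing_inv Ω hΩpd.det_pos.ne'.isUnit
  -- key matrix identities
  have hΩK : Ω * K = -(S + Aᵀ * X' * B)ᵀ := by
    show Ω * -(Ω⁻¹ * (S + Aᵀ * X' * B)ᵀ) = _
    rw [Matrix.mul_neg, ← Matrix.mul_assoc, hΩinv, Matrix.one_mul]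
  have hKΩ : Kᵀ * Ω = -(S + Aᵀ * X' * B) := by
    have h := congrArg Matrix.transpose hΩK
    simp only [Matrix.transpose_mul, Matrix.transpose_neg, Matrix.transpose_transpose,
      hΩs] at h
    exact h
  have hMK : (S + Aᵀ * X' * B) * K = -(Kᵀ * Ω * K) := by
    rw [hKΩ, Matrix.neg_mul, neg_neg]
  -- completing the square
  have key : ∀ (ζ : Fin n → ℝ) (d : Fin m → ℝ),
      ζ ⬝ᵥ Q.mulVec ζ + 2 * (ζ ⬝ᵥ S.mulVec (K *ᵥ ζ + d)) +
        (K *ᵥ ζ + d) ⬝ᵥ R.mulVec (K *ᵥ ζ + d) +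
        (A.mulVec ζ + B.mulVec (K *ᵥ ζ + d)) ⬝ᵥ
          X'.mulVec (A.mulVec ζ + B.mulVec (K *ᵥ ζ + d))
      = ζ ⬝ᵥ X.mulVec ζ + d ⬝ᵥ Ω *ᵥ d := by
    intro ζ d
    rw [step1 Q S R A B X' hX's ζ (K *ᵥ ζ + d)]
    have c1 : ζ ⬝ᵥ (S + Aᵀ * X' * B) *ᵥ (K *ᵥ ζ + d)
        = -(ζ ⬝ᵥ (Kᵀ * Ω * K) *ᵥ ζ) + ζ ⬝ᵥ (S + Aᵀ * X' * B) *ᵥ d := by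
      rw [mulVec_add, dotProduct_add, mulVec_mulVec, hMK, neg_mulVec, dotProduct_neg]
    have c2 : (K *ᵥ ζ + d) ⬝ᵥ (R + Bᵀ * X' * B) *ᵥ (K *ᵥ ζ + d)
        = ζ ⬝ᵥ (Kᵀ * Ω * K) *ᵥ ζ - 2 * (ζ ⬝ᵥ (S + Aᵀ * X' * B) *ᵥ d) + d ⬝ᵥ Ω *ᵥ d := by
      show (K *ᵥ ζ + d) ⬝ᵥ Ω *ᵥ (K *ᵥ ζ + d) = _
      rw [mulVec_add, dotProduct_add, add_dotProduct, add_dotProduct,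
        cross_symm hΩs (K *ᵥ ζ) d, conj_quad K Ω K, conj_half K Ω, hKΩ, neg_mulVec,
        dotProduct_neg]
      ring
    have c3 : ζ ⬝ᵥ X.mulVec ζ
        = ζ ⬝ᵥ Q *ᵥ ζ + ζ ⬝ᵥ (Aᵀ * X' * A) *ᵥ ζ - ζ ⬝ᵥ (Kᵀ * Ω * K) *ᵥ ζ := by
      show ζ ⬝ᵥ (Q + Aᵀ * X' * A - Kᵀ * Ω * K) *ᵥ ζ = _
      rw [sub_mulVec, add_mulVec, dotProduct_sub, dotProduct_add]
    rw [c1, c2, c3]; ring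
  -- nonnegativity of f
  have fnonneg : ∀ (ζ : Fin n → ℝ) (φ : Fin m → ℝ),
      0 ≤ ζ ⬝ᵥ Q.mulVec ζ + 2 * (ζ ⬝ᵥ S.mulVec φ) + φ ⬝ᵥ R.mulVec φ +
        (A.mulVec ζ + B.mulVec φ) ⬝ᵥ X'.mulVec (A.mulVec ζ + B.mulVec φ) := by
    intro ζ φ
    have h1 : 0 ≤ (ζ ⊕ᵥ φ) ⬝ᵥ (fromBlocks Q S Sᵀ R) *ᵥ (ζ ⊕ᵥ φ) := by
      have h := (posSemidef_iff_dotProduct_mulVec.mp hblock).2 (ζ ⊕ᵥ φ); rwa [star_trivial] at h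
    have h2 : (ζ ⊕ᵥ φ) ⬝ᵥ (fromBlocks Q S Sᵀ R) *ᵥ (ζ ⊕ᵥ φ)
        = ζ ⬝ᵥ Q.mulVec ζ + 2 * (ζ ⬝ᵥ S.mulVec φ) + φ ⬝ᵥ R.mulVec φ := by
      rw [fromBlocks_mulVec, Sum.elim_comp_inl, Sum.elim_comp_inr,
        sumElim_dotProduct_sumElim, dotProduct_add, dotProduct_add]
      have h3 : φ ⬝ᵥ Sᵀ *ᵥ ζ = ζ ⬝ᵥ S *ᵥ φ := by
        rw [mulVec_transpose, dotProduct_comm, dotProduct_mulVec]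
      rw [h3]; ring
    rw [h2] at h1
    have h4 : 0 ≤ (A.mulVec ζ + B.mulVec φ) ⬝ᵥ X'.mulVec (A.mulVec ζ + B.mulVec φ) := by
      have h := (posSemidef_iff_dotProduct_mulVec.mp hX').2 (A.mulVec ζ + B.mulVec φ); rwa [star_trivial] at h
    linarith
  constructor
  · -- X is positive semidefinite
    rw [posSemidef_iff_dotProduct_mulVec]
    constructor
    · show Xᴴ = X
      have hXh : Xᴴ = Xᵀ := by ext i j; simp [conjTranspose_apply, transpose_apply]
      rw [hXh]
      show (Q + Aᵀ * X' * A - Kᵀ * Ω * K)ᵀ = Q + Aᵀ * X' * A - Kᵀ * Ω * K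
      rw [transpose_sub, transpose_add, hQ.eq, transpose_mul, transpose_mul,
        transpose_transpose, hX's, transpose_mul, transpose_mul, transpose_transpose, hΩs]
      simp only [Matrix.mul_assoc]
    · intro ζ
      rw [star_trivial]
      have h0 := key ζ 0
      simp only [add_zero, mulVec_zero, dotProduct_zero] at h0
      have h1 := fnonneg ζ (K *ᵥ ζ)
      linarith
  · intro ζ f
    have hf : ∀ φ : Fin m → ℝ,
        f φ = ζ ⬝ᵥ X.mulVec ζ + (φ - K *ᵥ ζ) ⬝ᵥ Ω *ᵥ (φ - K *ᵥ ζ) := by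
      intro φ
      have h := key ζ (φ - K *ᵥ ζ)
      have hsum : K *ᵥ ζ + (φ - K *ᵥ ζ) = φ := by abel
      rw [hsum] at h
      exact h
    have hfK : f (K *ᵥ ζ) = ζ ⬝ᵥ X.mulVec ζ := by
      rw [hf (K *ᵥ ζ), sub_self]
      simp
    refine ⟨fun φ => ?_, fun φ hφ => ?_, hfK⟩
    · rw [hfK, hf φ]
      have h := (posSemidef_iff_dotProduct_mulVec.mp hΩpd.posSemidef).2 (φ - K *ᵥ ζ)
      rw [star_trivial] at h
      linarith
    · by_contra hne
      have hd : φ - K *ᵥ ζ ≠ 0 := sub_ne_zero.mpr hne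
      have h := (posDef_iff_dotProduct_mulVec.mp hΩpd).2 hd
      rw [star_trivial] at h
      rw [hf φ, hfK] at hφ
      linarith
end

section
/- The message-passing induction order is well defined: the relation ≺ on ℕ × V given by (t,i) ≺ (τ,j) if and only if t < τ, or (t = τ and i ≠ j and D j i = 0), is irreflexive, transitive, and well-founded. -/
/-- The message-passing induction order on `ℕ × V`:
`(t,i) ≺ (τ,j)` iff `t < τ`, or `t = τ`, `i ≠ j` and `D j i = 0`. -/
def precRel {V : Type*} (D : V → V → ℕ∞) : ℕ × V → ℕ × V → Prop :=
  fun p q => p.1 < q.1 ∨ (p.1 = q.1 ∧ p.2 ≠ q.2 ∧ D q.2 p.2 = 0)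

/-- The message-passing induction order is well defined: the relation `≺`
is irreflexive, transitive, and well-founded. -/
theorem precRel_wellfounded {V : Type*} [Fintype V] (D : V → V → ℕ∞)
    (ha : ∀ i, D i i = 0)
    (hb : ∀ i ℓ j, D i j ≤ D i ℓ + D ℓ j)
    (hd : ∀ i j, D i j = 0 → D j i = 0 → i = j) :
    (∀ p : ℕ × V, ¬ precRel D p p) ∧
    (∀ p q r : ℕ × V, precRel D p q → precRel D q r → precRel D p r) ∧
    WellFounded (precRel D) := by
  set S : V → V → Prop := fun i j => i ≠ j ∧ D j i = 0 with hS
  have hSirr : ∀ i, ¬ S i i := fun i h => h.1 rfl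
  have hStrans : ∀ i j k, S i j → S j k → S i k := by
    intro i j k ⟨hij, h1⟩ ⟨hjk, h2⟩
    have hki : D k i = 0 := by
      have := hb k j i
      rw [h1, h2] at this
      simpa using this
    refine ⟨?_, hki⟩
    rintro rfl
    exact hij (hd j i h1 h2).symm
  have irr : ∀ p : ℕ × V, ¬ precRel D p p := by
    rintro p (h | ⟨-, h, -⟩)
    · exact lt_irrefl _ h
    · exact h rfl
  have trans : ∀ p q r : ℕ × V, precRel D p q → precRel D q r → precRel D p r := by
    rintro p q r (h1 | ⟨e1, s1⟩) (h2 | ⟨e2, s2⟩)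
    · exact Or.inl (h1.trans h2)
    · exact Or.inl (e2 ▸ h1)
    · exact Or.inl (e1 ▸ h2)
    · exact Or.inr ⟨e1.trans e2, (hStrans _ _ _ ⟨s1.1, s1.2⟩ ⟨s2.1, s2.2⟩ : S p.2 r.2)⟩
  refine ⟨irr, trans, ?_⟩
  have : IsTrans V S := ⟨hStrans⟩
  have : IsIrrefl V S := ⟨hSirr⟩
  have hSwf : WellFounded S := Finite.wellFounded_of_trans_of_irrefl S
  have hlex : WellFounded (Prod.Lex (· < · : ℕ → ℕ → Prop) S) :=
    WellFounded.prod_lex (Nat.lt_wfRel.wf) hSwf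
  refine Subrelation.wf ?_ hlex
  rintro ⟨t, i⟩ ⟨τ, j⟩ (h | ⟨e, hne, h0⟩)
  · exact Prod.Lex.left _ _ h
  · cases e; exact Prod.Lex.right _ ⟨hne, h0⟩
end

section
/- Strongly connected (pure delay) case: if D i j < ∞ for all i, j ∈ V, then the full node set V belongs to U and satisfies V → V, and it is the unique self-loop of the information graph: for any k ∈ ℕ and j ∈ V, if s(k,j) = s(k+1,j) then s(k,j) = V. -/
/-- Strongly connected (pure delay) case: if `D i j < ∞` for all `i, j`, then
the full node set `V` belongs to `U`, satisfies `V → V`, and is the unique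
self-loop of the information graph. -/
theorem strongly_connected_case {V : Type*} [Fintype V] [Nonempty V]
    (D : V → V → ℕ∞)
    (ha : ∀ i, D i i = 0)
    (hb : ∀ i ℓ j, D i j ≤ D i ℓ + D ℓ j)
    (hc : ∀ (k : ℕ) (i j : V),
      D i j ≤ (k : ℕ∞) + 1 ↔ ∃ ℓ, D i ℓ ≤ 1 ∧ D ℓ j ≤ (k : ℕ∞))
    (hfin : ∀ i j : V, D i j < ⊤) :
    (Set.univ ∈ infoNodes D) ∧
    infoEdge D Set.univ Set.univ ∧
    ∀ (k : ℕ) (j : V), reach D k j = reach D (k + 1) j →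
      reach D k j = Set.univ := by
  classical
  -- a uniform bound N on all delays
  obtain ⟨N, hN⟩ : ∃ N : ℕ, ∀ i j : V, D i j ≤ (N : ℕ∞) := by
    refine ⟨Finset.univ.sup (fun p : V × V => (D p.1 p.2).toNat), fun i j => ?_⟩
    have h1 : D i j = ((D i j).toNat : ℕ∞) := (ENat.coe_toNat (hfin i j).ne).symm
    rw [h1]
    exact_mod_cast Finset.le_sup (f := fun p : V × V => (D p.1 p.2).toNat)
      (Finset.mem_univ (i, j))
  obtain ⟨j₀⟩ := (inferInstance : Nonempty V)
  have hreachN : ∀ (m : ℕ) (j : V), (N : ℕ∞) ≤ (m : ℕ∞) → reach D m j = Set.univ := by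
    intro m j hm
    ext i
    simp only [reach, Set.mem_setOf_eq, Set.mem_univ, iff_true]
    exact (hN i j).trans hm
  refine ⟨⟨N, j₀, (hreachN N j₀ le_rfl).symm⟩,
    ⟨N, j₀, (hreachN N j₀ le_rfl).symm, (hreachN (N + 1) j₀ (by exact_mod_cast Nat.le_succ N)).symm⟩,
    ?_⟩
  intro k j hk
  have stab : ∀ m : ℕ, reach D (k + m) j = reach D k j := by
    intro m
    induction m with
    | zero => rfl
    | succ m ih =>
      apply Set.Subset.antisymm
      · intro i hi
        have hi' : D i j ≤ (k : ℕ∞) + m + 1 := by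
          simpa [reach, Nat.cast_add, add_assoc] using hi
        obtain ⟨ℓ, hℓ1, hℓ2⟩ := (hc (k + m) i j).mp (by push_cast; exact_mod_cast hi')
        have hℓk : D ℓ j ≤ (k : ℕ∞) := by
          have : ℓ ∈ reach D k j := ih ▸ hℓ2
          exact this
        have : D i j ≤ (k : ℕ∞) + 1 := by
          calc D i j ≤ D i ℓ + D ℓ j := hb i ℓ j
          _ ≤ 1 + (k : ℕ∞) := add_le_add hℓ1 hℓk
          _ = (k : ℕ∞) + 1 := add_comm _ _
        have : i ∈ reach D (k + 1) j := by
          simpa [reach, Nat.cast_add] using this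
        exact hk ▸ this
      · intro i hi
        have : D i j ≤ (k : ℕ∞) := hi
        have : D i j ≤ ((k + (m + 1) : ℕ) : ℕ∞) := this.trans (by exact_mod_cast Nat.le_add_right _ _)
        exact this
  have := stab N
  rw [← this]
  exact hreachN (k + N) j (by exact_mod_cast Nat.le_add_left N k)
end
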